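/- Finite termination of the inner loop (Proposition 4.1(b), first part): fix γ > 0 and let {x_i}_{i≥0} ⊆ X with x₀ ∈ X be any sequence such that, for every i, x_{i+1} minimizes x ↦ φ(x) + (1/S) Σ_{s=1}^S ê_s(x) over X, where the surrogates ê_s(x) = ‖x‖²/(2γ) − ( ‖x_i‖²/(2γ) − e_γψ_s(x_i) ) − ⟨ x^s_i/γ + c^s_i, x − x_i ⟩ are built from subproblem solutions (x^s_i, y^s_i, c^s_i) at z = x_i with parameter γ. Then, under Assumptions A and B, Σ_{i=0}^∞ ‖x_{i+1} − x_i‖² < ∞; in particular ‖x_{i+1} − x_i‖ → 0, and for every ε > 0 the index min{ i : ‖x_{i+1} − x_i‖ ≤ ε γ } is finite. -/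

import Mathlib

open scoped RealInnerProductSpace
open Filter Topology

/-- The partial Moreau envelope of the recourse function:
`e_γψ(z) = inf { f(z,y) + ‖x - z‖²/(2γ) : x ∈ X̄, G(x,y) ≤ 0 }`. -/
noncomputable def penv {n₁ n₂ ℓ : ℕ}
    (Xb : Set (EuclideanSpace ℝ (Fin n₁)))
    (f : EuclideanSpace ℝ (Fin n₁) → EuclideanSpace ℝ (Fin n₂) → ℝ)
    (G : EuclideanSpace ℝ (Fin n₁) → EuclideanSpace ℝ (Fin n₂) → Fin ℓ → ℝ)
    (γ : ℝ) (z : EuclideanSpace ℝ (Fin n₁)) : ℝ :=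
  sInf {v : ℝ | ∃ x ∈ Xb, ∃ y : EuclideanSpace ℝ (Fin n₂),
    (∀ i, G x y i ≤ 0) ∧ v = f z y + ‖x - z‖ ^ 2 / (2 * γ)}

set_option maxHeartbeats 1000000 in
theorem stmt9 {n₁ n₂ ℓ S : ℕ} (hS : 0 < S)
    (φ : EuclideanSpace ℝ (Fin n₁) → ℝ) (hφ : ConvexOn ℝ Set.univ φ)
    (X Xb : Set (EuclideanSpace ℝ (Fin n₁)))
    (hXne : X.Nonempty) (hXconv : Convex ℝ X) (hXcomp : IsCompact X)
    (hXbne : Xb.Nonempty) (hXbconv : Convex ℝ Xb) (hXbcomp : IsCompact Xb)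
    (hXint : X ⊆ interior Xb)
    (f : Fin S → EuclideanSpace ℝ (Fin n₁) → EuclideanSpace ℝ (Fin n₂) → ℝ)
    (hfconc : ∀ s y, ConcaveOn ℝ Set.univ (fun x => f s x y))
    (hfconv : ∀ s x, ConvexOn ℝ Set.univ (fun y => f s x y))
    (G : Fin S → EuclideanSpace ℝ (Fin n₁) → EuclideanSpace ℝ (Fin n₂) → Fin ℓ → ℝ)
    (hG : ∀ s i, ConvexOn ℝ Set.univ
      (fun p : EuclideanSpace ℝ (Fin n₁) × EuclideanSpace ℝ (Fin n₂) => G s p.1 p.2 i))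
    (ψb : Fin S → EuclideanSpace ℝ (Fin n₁) → EuclideanSpace ℝ (Fin n₁) → ℝ)
    (hA : ∀ s, ∀ x ∈ Xb, ∀ z ∈ Xb, ∃ y : EuclideanSpace ℝ (Fin n₂),
      (∀ i, G s x y i ≤ 0) ∧ ψb s x z = f s z y ∧
      ∀ y' : EuclideanSpace ℝ (Fin n₂), (∀ i, G s x y' i ≤ 0) → ψb s x z ≤ f s z y')
    (κ : Fin S → ℝ) (hκ : ∀ s, 0 ≤ κ s)
    (hB : ∀ s, ∀ z ∈ X, ∀ x₁ ∈ Xb, ∀ x₂ ∈ Xb,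
      |ψb s x₁ z - ψb s x₂ z| ≤ κ s * ‖x₁ - x₂‖)
    (γ : ℝ) (hγ : 0 < γ)
    (xseq : ℕ → EuclideanSpace ℝ (Fin n₁))
    (hxseqX : ∀ i, xseq i ∈ X)
    (xs : ℕ → Fin S → EuclideanSpace ℝ (Fin n₁))
    (ys : ℕ → Fin S → EuclideanSpace ℝ (Fin n₂))
    (cs : ℕ → Fin S → EuclideanSpace ℝ (Fin n₁))
    (hxs : ∀ i s, xs i s ∈ Xb)
    (hfeas : ∀ i s j, G s (xs i s) (ys i s) j ≤ 0)
    (hmin : ∀ i s, ∀ x ∈ Xb, ∀ y : EuclideanSpace ℝ (Fin n₂), (∀ j, G s x y j ≤ 0) →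
      f s (xseq i) (ys i s) + ‖xs i s - xseq i‖ ^ 2 / (2 * γ)
        ≤ f s (xseq i) y + ‖x - xseq i‖ ^ 2 / (2 * γ))
    (hc : ∀ i s, ∀ z' : EuclideanSpace ℝ (Fin n₁),
      -f s z' (ys i s) ≥ -f s (xseq i) (ys i s) + ⟪cs i s, z' - xseq i⟫)
    (hmaster : ∀ i, ∀ x ∈ X,
      φ (xseq (i + 1)) + (1 / (S : ℝ)) * ∑ s : Fin S,
        (‖xseq (i + 1)‖ ^ 2 / (2 * γ)
          - (‖xseq i‖ ^ 2 / (2 * γ) - penv Xb (f s) (G s) γ (xseq i))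
          - ⟪(1 / γ) • xs i s + cs i s, xseq (i + 1) - xseq i⟫)
      ≤ φ x + (1 / (S : ℝ)) * ∑ s : Fin S,
        (‖x‖ ^ 2 / (2 * γ)
          - (‖xseq i‖ ^ 2 / (2 * γ) - penv Xb (f s) (G s) γ (xseq i))
          - ⟪(1 / γ) • xs i s + cs i s, x - xseq i⟫)) :
    Summable (fun i => ‖xseq (i + 1) - xseq i‖ ^ 2) ∧
    Tendsto (fun i => ‖xseq (i + 1) - xseq i‖) atTop (𝓝 0) ∧
    ∀ ε : ℝ, 0 < ε → ∃ i : ℕ, ‖xseq (i + 1) - xseq i‖ ≤ ε * γ := by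
  classical
  have hSne : (S:ℝ) ≠ 0 := Nat.cast_ne_zero.2 hS.ne'
  have hSinv : (0:ℝ) ≤ 1/(S:ℝ) := by positivity
  have hγ2 : (0:ℝ) < 2 * γ := by linarith
  obtain ⟨x₀, hx₀X⟩ := hXne
  have hXsub : X ⊆ Xb := fun x hx => interior_subset (hXint hx)
  have hx₀b : x₀ ∈ Xb := hXsub hx₀X
  obtain ⟨R, hR⟩ := isBounded_iff_forall_norm_le.1 hXbcomp.isBounded
  set D : ℝ := 2 * R with hD
  have hdiam : ∀ x ∈ Xb, ∀ y ∈ Xb, ‖x - y‖ ≤ D := by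
    intro x hx y hy
    calc ‖x - y‖ ≤ ‖x‖ + ‖y‖ := norm_sub_le _ _
    _ ≤ D := by have h1 := hR x hx; have h2 := hR y hy; rw [hD]; linarith
  -- value of penv along the sequence
  have L1 : ∀ i s, penv Xb (f s) (G s) γ (xseq i)
      = f s (xseq i) (ys i s) + ‖xs i s - xseq i‖ ^ 2 / (2 * γ) := by
    intro i s
    apply le_antisymm
    · apply csInf_le
      · refine ⟨f s (xseq i) (ys i s) + ‖xs i s - xseq i‖ ^ 2 / (2 * γ), ?_⟩
        rintro v ⟨x, hx, y, hy, rfl⟩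
        exact hmin i s x hx y hy
      · exact ⟨xs i s, hxs i s, ys i s, hfeas i s, rfl⟩
    · refine le_csInf ⟨f s (xseq i) (ys i s) + ‖xs i s - xseq i‖ ^ 2 / (2 * γ),
        xs i s, hxs i s, ys i s, hfeas i s, rfl⟩ ?_
      rintro v ⟨x, hx, y, hy, rfl⟩
      exact hmin i s x hx y hy
  -- lower bound on members of the penv defining set at points of X
  have L2 : ∀ s : Fin S, ∀ x ∈ X, ∀ v ∈ {v : ℝ | ∃ x' ∈ Xb, ∃ y : EuclideanSpace ℝ (Fin n₂),
      (∀ j, G s x' y j ≤ 0) ∧ v = f s x y + ‖x' - x‖ ^ 2 / (2 * γ)},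
      ψb s x₀ x - κ s * D ≤ v := by
    intro s x hx v hv
    obtain ⟨x', hx', y, hy, rfl⟩ := hv
    obtain ⟨y'', -, -, hmin'⟩ := hA s x' hx' x (hXsub hx)
    have h1 : ψb s x' x ≤ f s x y := hmin' y hy
    have h2 := abs_le.1 (hB s x hx x' hx' x₀ hx₀b)
    have h4 : κ s * ‖x' - x₀‖ ≤ κ s * D :=
      mul_le_mul_of_nonneg_left (hdiam x' hx' x₀ hx₀b) (hκ s)
    have h5 : (0:ℝ) ≤ ‖x' - x‖ ^ 2 / (2 * γ) := by positivity
    linarith [h2.1]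
  have hsetne : ∀ s : Fin S, ∀ x ∈ X, ({v : ℝ | ∃ x' ∈ Xb, ∃ y : EuclideanSpace ℝ (Fin n₂),
      (∀ j, G s x' y j ≤ 0) ∧ v = f s x y + ‖x' - x‖ ^ 2 / (2 * γ)}).Nonempty := by
    intro s x hx
    obtain ⟨y, hy, -, -⟩ := hA s x (hXsub hx) x (hXsub hx)
    exact ⟨_, x, hXsub hx, y, hy, rfl⟩
  have hpelow : ∀ s : Fin S, ∀ x ∈ X, ψb s x₀ x - κ s * D ≤ penv Xb (f s) (G s) γ x := by
    intro s x hx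
    exact le_csInf (hsetne s x hx) (L2 s x hx)
  -- surrogate dominates the envelope on X
  have hsur : ∀ i, ∀ s : Fin S, ∀ x ∈ X,
      penv Xb (f s) (G s) γ x ≤ ‖x‖ ^ 2 / (2 * γ)
        - (‖xseq i‖ ^ 2 / (2 * γ) - penv Xb (f s) (G s) γ (xseq i))
        - ⟪(1 / γ) • xs i s + cs i s, x - xseq i⟫ := by
    intro i s x hx
    have h0 : penv Xb (f s) (G s) γ x ≤ f s x (ys i s) + ‖xs i s - x‖ ^ 2 / (2 * γ) :=
      csInf_le ⟨ψb s x₀ x - κ s * D, L2 s x hx⟩ ⟨xs i s, hxs i s, ys i s, hfeas i s, rfl⟩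
    have h1 : f s x (ys i s) ≤ f s (xseq i) (ys i s) - ⟪cs i s, x - xseq i⟫ := by
      have := hc i s x; linarith
    rw [L1 i s]
    have e1 : ‖xs i s - x‖ ^ 2 = ‖xs i s‖ ^ 2 - 2 * ⟪xs i s, x⟫ + ‖x‖ ^ 2 :=
      norm_sub_sq_real _ _
    have e2 : ‖xs i s - xseq i‖ ^ 2 = ‖xs i s‖ ^ 2 - 2 * ⟪xs i s, xseq i⟫ + ‖xseq i‖ ^ 2 :=
      norm_sub_sq_real _ _
    have e3 : ⟪(1 / γ) • xs i s + cs i s, x - xseq i⟫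
        = (1/γ) * (⟪xs i s, x⟫ - ⟪xs i s, xseq i⟫) + ⟪cs i s, x - xseq i⟫ := by
      rw [inner_add_left, real_inner_smul_left, inner_sub_right]
    have key : ‖xs i s - x‖ ^ 2 / (2*γ) = ‖x‖ ^ 2 / (2*γ) - ‖xseq i‖ ^ 2 / (2*γ)
        + ‖xs i s - xseq i‖ ^ 2 / (2*γ) - (1/γ) * (⟪xs i s, x⟫ - ⟪xs i s, xseq i⟫) := by
      rw [e1, e2]; field_simp; ring
    rw [e3]
    linarith
  -- the master objective
  set M : ℕ → EuclideanSpace ℝ (Fin n₁) → ℝ := fun i x =>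
    φ x + (1 / (S : ℝ)) * ∑ s : Fin S,
      (‖x‖ ^ 2 / (2 * γ) - (‖xseq i‖ ^ 2 / (2 * γ) - penv Xb (f s) (G s) γ (xseq i))
        - ⟪(1 / γ) • xs i s + cs i s, x - xseq i⟫) with hMdef
  have hmaster' : ∀ i, ∀ x ∈ X, M i (xseq (i + 1)) ≤ M i x := by
    intro i x hx
    simp only [hMdef]
    exact hmaster i x hx
  set Fv : ℕ → ℝ := fun i =>
    φ (xseq i) + (1 / (S : ℝ)) * ∑ s : Fin S, penv Xb (f s) (G s) γ (xseq i) with hFdef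
  have hM_at : ∀ i, M i (xseq i) = Fv i := by
    intro i
    simp only [hMdef, hFdef]
    congr 1
    congr 1
    apply Finset.sum_congr rfl
    intro s _
    rw [sub_self, inner_zero_right]
    ring
  have hM_ge : ∀ i, Fv (i + 1) ≤ M i (xseq (i + 1)) := by
    intro i
    simp only [hMdef, hFdef]
    refine add_le_add_right (mul_le_mul_of_nonneg_left ?_ hSinv) _
    exact Finset.sum_le_sum fun s _ => hsur i s (xseq (i + 1)) (hxseqX (i + 1))
  clear_value Fv
  -- strong convexity of the master objective
  have hMconv : ∀ i, ∀ t : ℝ, t ∈ Set.Ioo (0:ℝ) 1 →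
      M i (xseq (i+1)) ≤ M i (xseq i) - (1 - t) * (‖xseq (i+1) - xseq i‖ ^ 2 / (2*γ)) := by
    intro i t ht
    set u := xseq (i+1) with hu
    set v := xseq i with hv
    set xt := (1 - t) • u + t • v with hxt
    have hxtX : xt ∈ X := hXconv (hxseqX (i+1)) (hxseqX i)
      (by linarith [ht.2]) (le_of_lt ht.1) (by ring)
    have hmast := hmaster' i xt hxtX
    have hxtv : xt - v = (1 - t) • (u - v) := by
      rw [hxt]; module
    have hnorm : ‖xt‖ ^ 2 = (1-t)*‖u‖ ^ 2 + t*‖v‖ ^ 2 - t*(1-t)*‖u - v‖ ^ 2 := by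
      have h1 : ‖xt‖ ^ 2 = ‖(1-t) • u‖ ^ 2 + 2 * ⟪(1-t) • u, t • v⟫ + ‖t • v‖ ^ 2 :=
        norm_add_sq_real _ _
      have h2 : ‖u - v‖ ^ 2 = ‖u‖ ^ 2 - 2 * ⟪u, v⟫ + ‖v‖ ^ 2 := norm_sub_sq_real _ _
      rw [norm_smul, norm_smul, real_inner_smul_left, real_inner_smul_right] at h1
      rw [Real.norm_eq_abs, Real.norm_eq_abs, abs_of_nonneg (by linarith [ht.2] : (0:ℝ) ≤ 1 - t),
        abs_of_nonneg (le_of_lt ht.1)] at h1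
      rw [h2]
      nlinarith [h1]
    have hterm : ∀ s : Fin S,
        (‖xt‖ ^ 2 / (2*γ) - (‖v‖ ^ 2 / (2*γ) - penv Xb (f s) (G s) γ v)
            - ⟪(1/γ) • xs i s + cs i s, xt - v⟫)
        = (1-t) * (‖u‖ ^ 2 / (2*γ) - (‖v‖ ^ 2 / (2*γ) - penv Xb (f s) (G s) γ v)
            - ⟪(1/γ) • xs i s + cs i s, u - v⟫)
          + t * (‖v‖ ^ 2 / (2*γ) - (‖v‖ ^ 2 / (2*γ) - penv Xb (f s) (G s) γ v)
            - ⟪(1/γ) • xs i s + cs i s, v - v⟫)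
          - t*(1-t)*(‖u - v‖ ^ 2 / (2*γ)) := by
      intro s
      rw [hxtv, real_inner_smul_right, sub_self, inner_zero_right, hnorm]
      ring
    have hφt : φ xt ≤ (1-t) * φ u + t * φ v := by
      have := hφ.2 (Set.mem_univ u) (Set.mem_univ v)
        (by linarith [ht.2] : (0:ℝ) ≤ 1 - t) (le_of_lt ht.1) (by ring)
      simpa [smul_eq_mul] using this
    have hMcomb : M i xt ≤ (1-t) * M i u + t * M i v
        - t*(1-t)*(‖u - v‖ ^ 2 / (2*γ)) := by
      have hsums : (∑ s : Fin S, (‖xt‖ ^ 2 / (2*γ)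
              - (‖v‖ ^ 2 / (2*γ) - penv Xb (f s) (G s) γ v)
              - ⟪(1/γ) • xs i s + cs i s, xt - v⟫))
          = (1-t) * (∑ s : Fin S, (‖u‖ ^ 2 / (2*γ)
              - (‖v‖ ^ 2 / (2*γ) - penv Xb (f s) (G s) γ v)
              - ⟪(1/γ) • xs i s + cs i s, u - v⟫))
            + t * (∑ s : Fin S, (‖v‖ ^ 2 / (2*γ)
              - (‖v‖ ^ 2 / (2*γ) - penv Xb (f s) (G s) γ v)
              - ⟪(1/γ) • xs i s + cs i s, v - v⟫))
            - (S:ℝ) * (t*(1-t)*(‖u - v‖ ^ 2 / (2*γ))) := by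
        rw [Finset.sum_congr rfl fun s _ => hterm s, Finset.sum_sub_distrib,
          Finset.sum_add_distrib, ← Finset.mul_sum, ← Finset.mul_sum,
          Finset.sum_const, Finset.card_univ, Fintype.card_fin, nsmul_eq_mul]
      simp only [hMdef]
      rw [hsums]
      have e : (1/(S:ℝ)) * ((S:ℝ) * (t*(1-t)*(‖u - v‖ ^ 2 / (2*γ))))
          = t*(1-t)*(‖u - v‖ ^ 2 / (2*γ)) := by field_simp
      set A := ∑ s : Fin S, (‖u‖ ^ 2 / (2*γ)
              - (‖v‖ ^ 2 / (2*γ) - penv Xb (f s) (G s) γ v)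
              - ⟪(1/γ) • xs i s + cs i s, u - v⟫) with hA1
      set Bv := ∑ s : Fin S, (‖v‖ ^ 2 / (2*γ)
              - (‖v‖ ^ 2 / (2*γ) - penv Xb (f s) (G s) γ v)
              - ⟪(1/γ) • xs i s + cs i s, v - v⟫) with hB1
      nlinarith [hφt, e]
    have hchain : M i u ≤ (1-t) * M i u + t * M i v - t*(1-t)*(‖u - v‖ ^ 2 / (2*γ)) :=
      le_trans hmast hMcomb
    have h6 : t * (M i u + (1-t) * (‖u - v‖ ^ 2 / (2*γ))) ≤ t * (M i v) := by nlinarith [hchain]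
    have h7 := le_of_mul_le_mul_left h6 ht.1
    linarith
  have hM3 : ∀ i, M i (xseq (i+1)) + ‖xseq (i+1) - xseq i‖ ^ 2 / (2*γ) ≤ M i (xseq i) := by
    intro i
    set q := ‖xseq (i+1) - xseq i‖ ^ 2 / (2*γ) with hqdef
    have hq0 : (0:ℝ) ≤ q := by rw [hqdef]; positivity
    refine le_of_forall_pos_le_add ?_
    intro ε hε
    set t := min (1/2 : ℝ) (ε/(q+1)) with htdef
    have ht1 : (0:ℝ) < t := lt_min (by norm_num) (by positivity)
    have ht2 : t < 1 := lt_of_le_of_lt (min_le_left _ _) (by norm_num)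
    have h := hMconv i t ⟨ht1, ht2⟩
    rw [← hqdef] at h
    have htq : t * q ≤ ε := by
      have h1 : t ≤ ε/(q+1) := min_le_right _ _
      calc t * q ≤ (ε/(q+1)) * q := mul_le_mul_of_nonneg_right h1 hq0
      _ ≤ ε := by rw [div_mul_eq_mul_div, div_le_iff₀ (by positivity)]; nlinarith
    linarith
  have hdesc : ∀ i, Fv (i+1) + ‖xseq (i+1) - xseq i‖ ^ 2 / (2*γ) ≤ Fv i := by
    intro i
    calc Fv (i+1) + ‖xseq (i+1) - xseq i‖ ^ 2 / (2*γ)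
        ≤ M i (xseq (i+1)) + ‖xseq (i+1) - xseq i‖ ^ 2 / (2*γ) :=
          add_le_add_left (hM_ge i) _
      _ ≤ M i (xseq i) := hM3 i
      _ = Fv i := hM_at i
  -- lower bound for Fv
  have hconc : ∀ s : Fin S, ConcaveOn ℝ Xb (fun x => ψb s x₀ x) := by
    intro s
    refine ⟨hXbconv, ?_⟩
    intro x hx y hy a b ha hb hab
    obtain ⟨ystar, hyfeas, heq, -⟩ := hA s x₀ hx₀b (a • x + b • y) (hXbconv hx hy ha hb hab)
    obtain ⟨yx, -, -, hminx⟩ := hA s x₀ hx₀b x hx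
    obtain ⟨yy, -, -, hminy⟩ := hA s x₀ hx₀b y hy
    have h1 : ψb s x₀ x ≤ f s x ystar := hminx ystar hyfeas
    have h2 : ψb s x₀ y ≤ f s y ystar := hminy ystar hyfeas
    have h3 := (hfconc s ystar).2 (Set.mem_univ x) (Set.mem_univ y) ha hb hab
    simp only [smul_eq_mul] at h3 ⊢
    have h4 : a * ψb s x₀ x + b * ψb s x₀ y ≤ a * f s x ystar + b * f s y ystar :=
      add_le_add (mul_le_mul_of_nonneg_left h1 ha) (mul_le_mul_of_nonneg_left h2 hb)
    rw [heq]
    exact le_trans h4 h3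
  have hbdd : ∀ s : Fin S, ∃ B : ℝ, ∀ x ∈ X, B ≤ ψb s x₀ x := by
    intro s
    have hcont : ContinuousOn (fun x => ψb s x₀ x) X :=
      ((hconc s).continuousOn_interior).mono hXint
    obtain ⟨z, hz, hzmin⟩ := hXcomp.exists_isMinOn ⟨x₀, hx₀X⟩ hcont
    exact ⟨ψb s x₀ z, fun x hx => hzmin hx⟩
  choose B hB2 using hbdd
  have hφbdd : ∃ Bφ : ℝ, ∀ x ∈ X, Bφ ≤ φ x := by
    have hcont : ContinuousOn φ X := by
      have := hφ.continuousOn_interior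
      rw [interior_univ] at this
      exact this.mono (Set.subset_univ X)
    obtain ⟨z, hz, hzmin⟩ := hXcomp.exists_isMinOn ⟨x₀, hx₀X⟩ hcont
    exact ⟨φ z, fun x hx => hzmin hx⟩
  obtain ⟨Bφ, hBφ⟩ := hφbdd
  set C0 : ℝ := Bφ + (1 / (S:ℝ)) * ∑ s : Fin S, (B s - κ s * D) with hC0
  clear_value C0
  have hFlow : ∀ i, C0 ≤ Fv i := by
    intro i
    have hx : xseq i ∈ X := hxseqX i
    simp only [hFdef, hC0]
    refine add_le_add (hBφ _ hx) (mul_le_mul_of_nonneg_left ?_ hSinv)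
    refine Finset.sum_le_sum fun s _ => ?_
    have h1 := hpelow s (xseq i) hx
    have h2 := hB2 s (xseq i) hx
    linarith
  -- telescoping
  have hpartial : ∀ n, Fv n + (∑ i ∈ Finset.range n, ‖xseq (i+1) - xseq i‖ ^ 2) / (2*γ)
      ≤ Fv 0 := by
    intro n
    induction n with
    | zero => simp
    | succ n ih =>
      rw [Finset.sum_range_succ, add_div]
      have := hdesc n
      linarith
  have hsumm : Summable (fun i => ‖xseq (i + 1) - xseq i‖ ^ 2) := by
    apply summable_of_sum_range_le (c := 2*γ*(Fv 0 - C0)) (fun i => by positivity)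
    intro n
    have h1 := hpartial n
    have h2 := hFlow n
    have h3 : (∑ i ∈ Finset.range n, ‖xseq (i+1) - xseq i‖ ^ 2) / (2*γ) ≤ Fv 0 - C0 := by
      linarith [h1, h2]
    calc (∑ i ∈ Finset.range n, ‖xseq (i+1) - xseq i‖ ^ 2)
        = ((∑ i ∈ Finset.range n, ‖xseq (i+1) - xseq i‖ ^ 2) / (2*γ)) * (2*γ) := by
          field_simp
      _ ≤ (Fv 0 - C0) * (2*γ) := mul_le_mul_of_nonneg_right h3 (le_of_lt hγ2)
      _ = 2*γ*(Fv 0 - C0) := by ring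
  have ht2 : Tendsto (fun i => ‖xseq (i + 1) - xseq i‖ ^ 2) atTop (𝓝 0) :=
    hsumm.tendsto_atTop_zero
  have htn : Tendsto (fun i => ‖xseq (i + 1) - xseq i‖) atTop (𝓝 0) := by
    have h := (Real.continuous_sqrt.tendsto 0).comp ht2
    rw [Real.sqrt_zero] at h
    exact h.congr fun i => by simp [Function.comp, Real.sqrt_sq (norm_nonneg _)]
  refine ⟨hsumm, htn, ?_⟩
  intro ε hε
  have hpos : (0:ℝ) < ε * γ := mul_pos hε hγ
  exact (htn.eventually (eventually_le_nhds hpos)).exists
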